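/- Let f(X) = a₀ + a₁X + ⋯ + a_nXⁿ ∈ ℤ[X] and let a, b be integers with a² < b² such that |a_n| > Σ_{i=0}^{n−1} |a_i|·(|a+b|/2)^{i−n}. Suppose |f(a)| = p^{k₁}·r and |f(b)| = p^{k₂} with p prime, k₂ > k₁ ≥ 0 and 0 < r < p. Then f is a product of at most 1 + ⌊(k₂ − k₁ − 1)·log p / log(p/r)⌋ irreducible factors over ℚ. -/

import Mathlib

open Polynomial Real

noncomputable section

/-- `d` is an admissible divisor of `f(a)`. -/
def AdmDiv (f : Polynomial ℤ) (a d : ℤ) : Prop :=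
  d ∣ f.eval a ∧
    Int.gcd d (f.eval a / d) ∣ Int.gcd (f.eval a) (f.derivative.eval a)

/-- `d` is a unitary divisor of `N`. -/
def UnitDiv (N d : ℤ) : Prop := d ∣ N ∧ Int.gcd d (N / d) = 1

/-- `f` is a product of at most `k` nonconstant irreducible factors over `ℚ`
(counting multiplicities): it cannot be written as a product of `k + 1`
nonconstant polynomials over `ℚ`. -/
def FactorsAtMost (f : Polynomial ℤ) (k : ℕ) : Prop :=
  ∀ g : Fin (k + 1) → Polynomial ℚ, (∀ i, 0 < (g i).natDegree) →
    f.map (Int.castRingHom ℚ) ≠ ∏ i, g i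

/-- `q` is the quantity `q_k` of the paper: the greatest ratio `d₂/d₁` of
admissible divisors of `f(b)` and `f(a)` not exceeding `(|f(b)|/|f(a)|)^(1/(k+1))`. -/
def IsQk (f : Polynomial ℤ) (a b : ℤ) (k : ℕ) (q : ℝ) : Prop :=
  IsGreatest {x : ℝ | ∃ d₁ d₂ : ℤ, AdmDiv f a d₁ ∧ AdmDiv f b d₂ ∧
    x = (d₂ : ℝ) / (d₁ : ℝ) ∧
    x ≤ (|((f.eval b : ℤ) : ℝ)| / |((f.eval a : ℤ) : ℝ)|) ^ ((k + 1 : ℝ))⁻¹} q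

/-- `q` is the quantity `q^u_k` of the paper, defined via unitary divisors. -/
def IsQuk (f : Polynomial ℤ) (a b : ℤ) (k : ℕ) (q : ℝ) : Prop :=
  IsGreatest {x : ℝ | ∃ d₁ d₂ : ℤ, UnitDiv (f.eval a) d₁ ∧ UnitDiv (f.eval b) d₂ ∧
    x = (d₂ : ℝ) / (d₁ : ℝ) ∧
    x ≤ (|((f.eval b : ℤ) : ℝ)| / |((f.eval a : ℤ) : ℝ)|) ^ ((k + 1 : ℝ))⁻¹} q


private lemma my_prod_le (F G : ℂ → ℝ) (s : Multiset ℂ)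
    (h : ∀ z ∈ s, 0 ≤ F z ∧ F z ≤ G z) :
    0 ≤ (s.map F).prod ∧ (s.map F).prod ≤ (s.map G).prod := by
  induction s using Multiset.induction with
  | empty => simp
  | cons z t ih =>
    simp only [Multiset.map_cons, Multiset.prod_cons]
    obtain ⟨h1, h2⟩ := h z (Multiset.mem_cons_self z t)
    obtain ⟨ih1, ih2⟩ := ih (fun w hw => h w (Multiset.mem_cons_of_mem hw))
    refine ⟨mul_nonneg h1 ih1, ?_⟩
    exact mul_le_mul h2 ih2 ih1 (h1.trans h2)

private lemma my_prod_lt (F G : ℂ → ℝ) (s : Multiset ℂ) (hs : s ≠ 0)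
    (h : ∀ z ∈ s, 0 < F z ∧ F z < G z) :
    (s.map F).prod < (s.map G).prod := by
  obtain ⟨z, hz⟩ := Multiset.exists_mem_of_ne_zero hs
  obtain ⟨t, rfl⟩ : ∃ t, s = z ::ₘ t := ⟨s.erase z, (Multiset.cons_erase hz).symm⟩
  simp only [Multiset.map_cons, Multiset.prod_cons]
  obtain ⟨h1, h2⟩ := h z (Multiset.mem_cons_self z t)
  obtain ⟨ih1, ih2⟩ := my_prod_le F G t
    (fun w hw => ⟨(h w (Multiset.mem_cons_of_mem hw)).1.le,
      (h w (Multiset.mem_cons_of_mem hw)).2.le⟩)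
  have hGt : 0 < (t.map G).prod := by
    apply Multiset.prod_pos
    intro x hx
    obtain ⟨w, hw, rfl⟩ := Multiset.mem_map.1 hx
    exact (h w (Multiset.mem_cons_of_mem hw)).1.trans (h w (Multiset.mem_cons_of_mem hw)).2
  calc F z * (t.map F).prod ≤ F z * (t.map G).prod :=
        mul_le_mul_of_nonneg_left ih2 h1.le
    _ < G z * (t.map G).prod := mul_lt_mul_of_pos_right h2 hGt

private lemma my_geom {A B x : ℝ} (h2 : A ^ 2 < B ^ 2) (hx : 2 * |x| < |A + B|) :
    (A - x) ^ 2 < (B - x) ^ 2 := by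
  have hax : x ≤ |x| := le_abs_self x
  have hax' : -x ≤ |x| := neg_le_abs x
  rcases le_or_gt (A + B) 0 with hab | hab
  · rw [abs_of_nonpos hab] at hx
    have hBA : B - A < 0 := by nlinarith
    nlinarith
  · rw [abs_of_pos hab] at hx
    have hBA : 0 < B - A := by nlinarith
    nlinarith

private lemma my_geom' {a b : ℤ} (hab2 : a ^ 2 < b ^ 2) {z : ℂ}
    (hz : ‖z‖ < (|a + b| : ℝ) / 2) :
    ‖(a : ℂ) - z‖ < ‖(b : ℂ) - z‖ := by
  have h2 : ((a : ℝ)) ^ 2 < ((b : ℝ)) ^ 2 := by exact_mod_cast hab2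
  have hre : |z.re| ≤ ‖z‖ := Complex.abs_re_le_norm z
  have hx : 2 * |z.re| < |(a : ℝ) + (b : ℝ)| := by
    have : ((|a + b| : ℤ) : ℝ) = |(a : ℝ) + (b : ℝ)| := by push_cast; rfl
    rw [← this]; linarith [hre.trans_lt hz, hz]
  have key := my_geom h2 hx
  apply lt_of_pow_lt_pow_left₀ 2 (norm_nonneg _)
  rw [Complex.sq_norm, Complex.sq_norm, Complex.normSq_apply, Complex.normSq_apply]
  simp only [Complex.sub_re, Complex.sub_im, Complex.intCast_re, Complex.intCast_im]
  nlinarith [sq_nonneg z.im]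

private lemma my_root_bound (f : Polynomial ℤ) {R : ℝ} (hR : 0 < R)
    (hlead : (|f.leadingCoeff| : ℝ) >
      ∑ i ∈ Finset.range f.natDegree,
        (|f.coeff i| : ℝ) * R ^ ((i : ℤ) - (f.natDegree : ℤ)))
    {z : ℂ} (hz : (f.map (Int.castRingHom ℂ)).eval z = 0) :
    ‖z‖ < R := by
  by_contra hcon
  push_neg at hcon
  set n := f.natDegree with hn
  set F := f.map (Int.castRingHom ℂ) with hF
  have hzpos : 0 < ‖z‖ := lt_of_lt_of_le hR hcon
  have hzn : 0 < ‖z‖ ^ n := pow_pos hzpos n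
  have hev : F.eval z = ∑ i ∈ Finset.range (n + 1), F.coeff i * z ^ i := by
    apply eval_eq_sum_range'
    exact lt_of_le_of_lt natDegree_map_le (Nat.lt_succ_self n)
  rw [hz] at hev
  rw [Finset.sum_range_succ] at hev
  have hev2 : F.coeff n * z ^ n = -∑ i ∈ Finset.range n, F.coeff i * z ^ i := by
    linear_combination -hev
  have hcoe : ∀ i, ‖F.coeff i‖ = (|f.coeff i| : ℝ) := by
    intro i
    rw [hF, coeff_map, Int.coe_castRingHom, Complex.norm_intCast]
  have habs : (|f.leadingCoeff| : ℝ) * ‖z‖ ^ n ≤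
      ∑ i ∈ Finset.range n, (|f.coeff i| : ℝ) * ‖z‖ ^ i := by
    have h1 : ‖F.coeff n * z ^ n‖ =
        (|f.leadingCoeff| : ℝ) * ‖z‖ ^ n := by
      rw [norm_mul, norm_pow, hcoe n]
      rfl
    calc (|f.leadingCoeff| : ℝ) * ‖z‖ ^ n
        = ‖F.coeff n * z ^ n‖ := h1.symm
      _ = ‖∑ i ∈ Finset.range n, F.coeff i * z ^ i‖ := by rw [hev2, norm_neg]
      _ ≤ ∑ i ∈ Finset.range n, ‖F.coeff i * z ^ i‖ :=
          norm_sum_le _ _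
      _ = ∑ i ∈ Finset.range n, (|f.coeff i| : ℝ) * ‖z‖ ^ i := by
          apply Finset.sum_congr rfl
          intro i _
          rw [norm_mul, norm_pow, hcoe i]
  have hterm : ∀ i ∈ Finset.range n, (|f.coeff i| : ℝ) * ‖z‖ ^ i ≤
      ((|f.coeff i| : ℝ) * R ^ ((i : ℤ) - (n : ℤ))) * ‖z‖ ^ n := by
    intro i hi
    rw [Finset.mem_range] at hi
    have h1 : ‖z‖ ^ i ≤ R ^ ((i : ℤ) - (n : ℤ)) * ‖z‖ ^ n := by
      rw [zpow_sub₀ hR.ne', zpow_natCast, zpow_natCast, div_mul_eq_mul_div,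
        le_div_iff₀ (pow_pos hR n)]
      have hsplit : n = i + (n - i) := (Nat.add_sub_cancel' hi.le).symm
      have hRn : R ^ n = R ^ i * R ^ (n - i) := by
        rw [← pow_add, Nat.add_sub_cancel' hi.le]
      calc ‖z‖ ^ i * R ^ n = (‖z‖ ^ i * R ^ i) * R ^ (n - i) := by
            rw [hRn]; ring
        _ ≤ (‖z‖ ^ i * R ^ i) * ‖z‖ ^ (n - i) := by
            apply mul_le_mul_of_nonneg_left (pow_le_pow_left₀ hR.le hcon _)
            positivity
        _ = R ^ i * (‖z‖ ^ i * ‖z‖ ^ (n - i)) := by ring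
        _ = R ^ i * ‖z‖ ^ n := by rw [← pow_add, ← hsplit]
    calc (|f.coeff i| : ℝ) * ‖z‖ ^ i
        ≤ (|f.coeff i| : ℝ) * (R ^ ((i : ℤ) - (n : ℤ)) * ‖z‖ ^ n) := by
          apply mul_le_mul_of_nonneg_left h1
          positivity
      _ = ((|f.coeff i| : ℝ) * R ^ ((i : ℤ) - (n : ℤ))) * ‖z‖ ^ n := by ring
  have hfinal : (|f.leadingCoeff| : ℝ) * ‖z‖ ^ n <
      (|f.leadingCoeff| : ℝ) * ‖z‖ ^ n := by
    calc (|f.leadingCoeff| : ℝ) * ‖z‖ ^ n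
        ≤ ∑ i ∈ Finset.range n, (|f.coeff i| : ℝ) * ‖z‖ ^ i := habs
      _ ≤ ∑ i ∈ Finset.range n, ((|f.coeff i| : ℝ) * R ^ ((i : ℤ) - (n : ℤ))) *
            ‖z‖ ^ n := Finset.sum_le_sum hterm
      _ = (∑ i ∈ Finset.range n, (|f.coeff i| : ℝ) * R ^ ((i : ℤ) - (n : ℤ))) *
            ‖z‖ ^ n := by rw [← Finset.sum_mul]
      _ < (|f.leadingCoeff| : ℝ) * ‖z‖ ^ n := by
          apply mul_lt_mul_of_pos_right hlead hzn
  exact lt_irrefl _ hfinal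

private lemma my_eval_lt (h : Polynomial ℤ) (hd : 0 < h.natDegree) (a b : ℤ)
    (ha : h.eval a ≠ 0)
    (hroots : ∀ z ∈ (h.map (Int.castRingHom ℂ)).roots,
      ‖(a : ℂ) - z‖ < ‖(b : ℂ) - z‖) :
    (h.eval a).natAbs < (h.eval b).natAbs := by
  set H := h.map (Int.castRingHom ℂ) with hH
  have h0 : h ≠ 0 := fun hc => by simp [hc] at hd
  have hH0 : H ≠ 0 := by
    rw [hH, Ne, Polynomial.map_eq_zero_iff (Int.cast_injective (α := ℂ))]
    exact h0
  have hdeg : H.natDegree = h.natDegree :=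
    natDegree_map_eq_of_injective (Int.cast_injective (α := ℂ)) h
  have hsplit : H.Splits := IsAlgClosed.splits H
  have hcard : Multiset.card H.roots = H.natDegree := by
    have := hsplit.natDegree_eq_card_roots
    simpa using this.symm
  have hroots0 : H.roots ≠ 0 := by
    intro hc
    rw [hc] at hcard
    simp [hdeg] at hcard
    omega
  have hfact : H = C H.leadingCoeff * (H.roots.map fun z => X - C z).prod :=
    hsplit.eq_prod_roots
  have heval : ∀ x : ℤ, ‖((h.eval x : ℤ) : ℂ)‖ =
      ‖H.leadingCoeff‖ *
        (H.roots.map fun z => ‖(x : ℂ) - z‖).prod := by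
    intro x
    have h1 : ((h.eval x : ℤ) : ℂ) = H.eval ((x : ℤ) : ℂ) :=
      (Polynomial.eval_intCast_map (Int.castRingHom ℂ) h x).symm
    rw [h1]
    conv_lhs => rw [hfact]
    rw [eval_mul, eval_C, norm_mul, eval_multiset_prod, Multiset.map_map,
      show ∀ s : Multiset ℂ, ‖s.prod‖ = (s.map (‖·‖)).prod from
        fun s => map_multiset_prod (normHom : ℂ →*₀ ℝ) s, Multiset.map_map]
    congr 1
    apply congrArg
    apply Multiset.map_congr rfl
    intro z _
    simp
  have hlc : 0 < ‖H.leadingCoeff‖ := by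
    simp only [norm_pos_iff]
    exact leadingCoeff_ne_zero.mpr hH0
  have hne : ∀ z ∈ H.roots, (a : ℂ) ≠ z := by
    intro z hz hcz
    have hr : H.IsRoot z := (Polynomial.mem_roots hH0).1 hz
    rw [← hcz] at hr
    have h2 : ((h.eval a : ℤ) : ℂ) = H.eval ((a : ℤ) : ℂ) :=
      (Polynomial.eval_intCast_map (Int.castRingHom ℂ) h a).symm
    have h3 : ((h.eval a : ℤ) : ℂ) = 0 := h2.trans hr
    exact ha (by exact_mod_cast h3)
  have hprod : (H.roots.map fun z => ‖(a : ℂ) - z‖).prod <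
      (H.roots.map fun z => ‖(b : ℂ) - z‖).prod := by
    apply my_prod_lt _ _ _ hroots0
    intro z hz
    refine ⟨?_, hroots z hz⟩
    rw [norm_pos_iff]
    exact sub_ne_zero.mpr (hne z hz)
  have hfin : ‖((h.eval a : ℤ) : ℂ)‖ < ‖((h.eval b : ℤ) : ℂ)‖ := by
    rw [heval a, heval b]
    exact mul_lt_mul_of_pos_left hprod hlc
  rw [Complex.norm_intCast, Complex.norm_intCast] at hfin
  have : ((h.eval a).natAbs : ℝ) < ((h.eval b).natAbs : ℝ) := by
    rwa [Nat.cast_natAbs, Nat.cast_natAbs, Int.cast_abs, Int.cast_abs]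
  exact_mod_cast this

private lemma my_K_ge (p k₁ k₂ r : ℕ) (hp : p.Prime) (hk : k₁ < k₂) (hr0 : 0 < r)
    (hrp : r < p) :
    k₂ - k₁ ≤ 1 + (⌊((k₂ : ℝ) - (k₁ : ℝ) - 1) * Real.logb ((p : ℝ) / (r : ℝ)) (p : ℝ)⌋).toNat := by
  have hr1 : (1 : ℝ) ≤ (r : ℝ) := by exact_mod_cast hr0
  have hrpos : (0 : ℝ) < (r : ℝ) := by positivity
  have hpr : (1 : ℝ) < (p : ℝ) / (r : ℝ) := by
    rw [lt_div_iff₀ hrpos, one_mul]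
    exact_mod_cast hrp
  have hlog1 : (1 : ℝ) ≤ Real.logb ((p : ℝ) / (r : ℝ)) (p : ℝ) := by
    rw [Real.logb, le_div_iff₀ (Real.log_pos hpr), one_mul]
    apply Real.log_le_log (by positivity)
    apply div_le_self (by positivity) hr1
  set x := ((k₂ : ℝ) - (k₁ : ℝ) - 1) * Real.logb ((p : ℝ) / (r : ℝ)) (p : ℝ) with hx
  have hd : ((k₂ - k₁ - 1 : ℕ) : ℝ) ≤ x := by
    have h1 : ((k₂ - k₁ - 1 : ℕ) : ℝ) = (k₂ : ℝ) - (k₁ : ℝ) - 1 := by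
      have : k₁ + 1 ≤ k₂ := hk
      push_cast [Nat.cast_sub (by omega : k₁ ≤ k₂), Nat.cast_sub (by omega : 1 ≤ k₂ - k₁)]
      ring
    have h2 : (0:ℝ) ≤ (k₂ : ℝ) - (k₁ : ℝ) - 1 := by
      rw [← h1]; positivity
    rw [h1, hx]
    nlinarith [hlog1, h2]
  have hfl : ((k₂ - k₁ - 1 : ℕ) : ℤ) ≤ ⌊x⌋ := Int.le_floor.2 (by exact_mod_cast hd)
  have := Int.toNat_le_toNat hfl
  rw [Int.toNat_natCast] at this
  omega

private lemma my_normalize (q : Polynomial ℚ) (hq : q ≠ 0) :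
    ∃ (h : Polynomial ℤ) (d : ℚ), d ≠ 0 ∧ h.IsPrimitive ∧
      h.map (Int.castRingHom ℚ) = C d * q ∧ h.natDegree = q.natDegree := by
  obtain ⟨s, hs⟩ := IsLocalization.integerNormalization_map_to_map (nonZeroDivisors ℤ) q
  set N := IsLocalization.integerNormalization (nonZeroDivisors ℤ) q with hN
  have hs0 : ((s : ℤ) : ℚ) ≠ 0 := by
    exact_mod_cast nonZeroDivisors.coe_ne_zero s
  have hsmul : (s : ℤ) • q = C ((s : ℤ) : ℚ) * q := by
    rw [zsmul_eq_mul]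
    norm_cast
  have hN0 : N ≠ 0 := by
    intro hc
    rw [hc, Polynomial.map_zero] at hs
    rw [hsmul] at hs
    rcases mul_eq_zero.1 hs.symm with h | h
    · exact hs0 (by simpa using h)
    · exact hq h
  have hc0 : ((N.content : ℤ) : ℚ) ≠ 0 := by
    exact_mod_cast content_eq_zero_iff.not.mpr hN0
  have key : C ((N.content : ℤ) : ℚ) * N.primPart.map (Int.castRingHom ℚ) =
      C ((s : ℤ) : ℚ) * q := by
    calc C ((N.content : ℤ) : ℚ) * N.primPart.map (Int.castRingHom ℚ)
        = (C N.content * N.primPart).map (Int.castRingHom ℚ) := by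
          rw [Polynomial.map_mul, Polynomial.map_C]
          norm_cast
      _ = N.map (Int.castRingHom ℚ) := by rw [← N.eq_C_content_mul_primPart]
      _ = (s : ℤ) • q := by rw [← algebraMap_int_eq]; exact hs
      _ = C ((s : ℤ) : ℚ) * q := hsmul
  have hd0 : ((s : ℤ) : ℚ) / ((N.content : ℤ) : ℚ) ≠ 0 := div_ne_zero hs0 hc0
  have hmap : N.primPart.map (Int.castRingHom ℚ) =
      C (((s : ℤ) : ℚ) / ((N.content : ℤ) : ℚ)) * q := by
    apply mul_left_cancel₀ (show (C ((N.content : ℤ) : ℚ)) ≠ 0 by simpa using hc0)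
    rw [key, ← mul_assoc, ← C_mul, mul_comm (((N.content : ℤ) : ℚ)),
      div_mul_cancel₀ _ hc0]
  refine ⟨N.primPart, _, hd0, N.isPrimitive_primPart, hmap, ?_⟩
  have h1 : (N.primPart.map (Int.castRingHom ℚ)).natDegree = N.primPart.natDegree :=
    natDegree_map_eq_of_injective (Int.cast_injective (α := ℚ)) _
  rw [← h1, hmap, natDegree_C_mul hd0]

theorem stmt8 (f : Polynomial ℤ) (a b : ℤ) (hab2 : a ^ 2 < b ^ 2)
    (hlead : (|f.leadingCoeff| : ℝ) >
      ∑ i ∈ Finset.range f.natDegree,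
        (|f.coeff i| : ℝ) * ((|a + b| : ℝ) / 2) ^ ((i : ℤ) - (f.natDegree : ℤ)))
    (p : ℕ) (hp : p.Prime) (k₁ k₂ r : ℕ) (hk : k₁ < k₂) (hr0 : 0 < r) (hrp : r < p)
    (hfa : (f.eval a).natAbs = p ^ k₁ * r) (hfb : (f.eval b).natAbs = p ^ k₂) :
    FactorsAtMost f
      (1 + (⌊((k₂ : ℝ) - (k₁ : ℝ) - 1) * Real.logb ((p : ℝ) / (r : ℝ)) (p : ℝ)⌋).toNat) := by
  set K := 1 + (⌊((k₂ : ℝ) - (k₁ : ℝ) - 1) *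
    Real.logb ((p : ℝ) / (r : ℝ)) (p : ℝ)⌋).toNat with hKdef
  intro g hg hF
  have hKge : k₂ - k₁ ≤ K := my_K_ge p k₁ k₂ r hp hk hr0 hrp
  -- basic nonvanishing
  have hfa0 : f.eval a ≠ 0 := by
    intro hc
    rw [hc] at hfa
    simp only [Int.natAbs_zero] at hfa
    have : 0 < p ^ k₁ * r := Nat.mul_pos (pow_pos hp.pos _) hr0
    omega
  have hfb0 : f.eval b ≠ 0 := by
    intro hc
    rw [hc] at hfb
    simp only [Int.natAbs_zero] at hfb
    have : 0 < p ^ k₂ := pow_pos hp.pos _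
    omega
  have hf0 : f ≠ 0 := fun hc => hfa0 (by rw [hc]; simp)
  have hg0 : ∀ i, g i ≠ 0 := by
    intro i hc
    have := hg i
    rw [hc] at this
    simp at this
  -- normalize each factor
  choose h d hd0 hprim hmap hdeg using fun i => my_normalize (g i) (hg0 i)
  have hh0 : ∀ i, h i ≠ 0 := fun i => (hprim i).ne_zero
  set P := ∏ i, h i with hPdef
  have hPprim : P.IsPrimitive :=
    Finset.prod_induction h Polynomial.IsPrimitive (fun u v hu hv => hu.mul hv)
      isPrimitive_one (fun i _ => hprim i)
  have hP0 : P ≠ 0 := hPprim.ne_zero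
  have hD0 : (∏ i, d i) ≠ 0 := Finset.prod_ne_zero_iff.2 fun i _ => hd0 i
  have hPmap : P.map (Int.castRingHom ℚ) =
      C (∏ i, d i) * f.map (Int.castRingHom ℚ) := by
    rw [hPdef, Polynomial.map_prod, hF]
    calc (∏ i, (h i).map (Int.castRingHom ℚ)) = ∏ i, (C (d i) * g i) := by
          exact Finset.prod_congr rfl fun i _ => hmap i
      _ = (∏ i, C (d i)) * ∏ i, g i := Finset.prod_mul_distrib
      _ = C (∏ i, d i) * ∏ i, g i := by rw [← map_prod C d Finset.univ]
  -- Gauss: P divides f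
  have hPf : P ∣ f := by
    have h2 : P.map (Int.castRingHom ℚ) ∣ f.map (Int.castRingHom ℚ) := by
      refine ⟨C (∏ i, d i)⁻¹, ?_⟩
      rw [hPmap, mul_comm, ← mul_assoc, ← C_mul, inv_mul_cancel₀ hD0, C_1, one_mul]
    have hc0 : ((f.content : ℤ) : ℚ) ≠ 0 := by
      exact_mod_cast content_eq_zero_iff.not.mpr hf0
    have h3 : f.map (Int.castRingHom ℚ) =
        C ((f.content : ℤ) : ℚ) * f.primPart.map (Int.castRingHom ℚ) := by
      conv_lhs => rw [f.eq_C_content_mul_primPart]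
      rw [Polynomial.map_mul, Polynomial.map_C]
      norm_cast
    have h4 : P.map (Int.castRingHom ℚ) ∣ f.primPart.map (Int.castRingHom ℚ) := by
      have h5 : f.primPart.map (Int.castRingHom ℚ) =
          C ((f.content : ℤ) : ℚ)⁻¹ * f.map (Int.castRingHom ℚ) := by
        rw [h3, ← mul_assoc, ← C_mul, inv_mul_cancel₀ hc0, C_1, one_mul]
      rw [h5]
      exact h2.mul_left _
    exact ((IsPrimitive.Int.dvd_iff_map_cast_dvd_map_cast P f.primPart hPprim).2 h4).trans f.primPart_dvd
  obtain ⟨Q, hQ⟩ := hPf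
  have hQ0 : Q ≠ 0 := by
    intro hc
    rw [hc, mul_zero] at hQ
    exact hf0 hQ
  -- Q is a constant
  have hdegf : f.natDegree = (f.map (Int.castRingHom ℚ)).natDegree :=
    (natDegree_map_eq_of_injective (Int.cast_injective (α := ℚ)) f).symm
  have hdegQ : Q.natDegree = 0 := by
    have h6 := natDegree_mul hP0 hQ0
    rw [← hQ] at h6
    have h7 : P.natDegree = f.natDegree := by
      rw [hPdef, natDegree_prod _ _ fun i _ => hh0 i, hdegf, hF,
        natDegree_prod _ _ fun i _ => hg0 i]
      exact Finset.sum_congr rfl fun i _ => hdeg i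
    omega
  obtain ⟨t, ht⟩ := natDegree_eq_zero.1 hdegQ
  have ht0 : t ≠ 0 := by
    intro hc
    rw [hc, map_zero] at ht
    exact hQ0 ht.symm
  -- root bound data
  have habne : a + b ≠ 0 := by
    intro hc
    have hb : b = -a := by omega
    rw [hb] at hab2
    simp at hab2
  have hRpos : (0 : ℝ) < (|a + b| : ℝ) / 2 := by
    have : ((a : ℝ)) + (b : ℝ) ≠ 0 := by
      intro hc
      exact habne (by exact_mod_cast hc)
    positivity
  -- comparison of evaluations of each factor
  have hAB : ∀ i, ((h i).eval a).natAbs < ((h i).eval b).natAbs := by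
    intro i
    have hdvd : h i ∣ f := (Finset.dvd_prod_of_mem h (Finset.mem_univ i)).trans ⟨Q, hQ⟩
    have heva : (h i).eval a ≠ 0 := by
      intro hc
      have := Polynomial.eval_dvd (x := a) hdvd
      rw [hc] at this
      exact hfa0 (zero_dvd_iff.1 this)
    apply my_eval_lt (h i) (by rw [hdeg i]; exact hg i) a b heva
    intro z hz
    have hzf : (f.map (Int.castRingHom ℂ)).eval z = 0 := by
      obtain ⟨w, hw⟩ := hdvd
      have hroot : ((h i).map (Int.castRingHom ℂ)).eval z = 0 := by
        have := (Polynomial.mem_roots (by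
          rw [Ne, Polynomial.map_eq_zero_iff (Int.cast_injective (α := ℂ))]
          exact hh0 i)).1 hz
        exact this
      rw [hw, Polynomial.map_mul, eval_mul, hroot, zero_mul]
    have hzlt : ‖z‖ < (|a + b| : ℝ) / 2 := my_root_bound f hRpos hlead hzf
    exact my_geom' hab2 hzlt
  -- pass to natural numbers
  set A : Fin (K + 1) → ℕ := fun i => ((h i).eval a).natAbs with hA
  set B : Fin (K + 1) → ℕ := fun i => ((h i).eval b).natAbs with hB
  set T := t.natAbs with hT
  have hT0 : T ≠ 0 := Int.natAbs_ne_zero.2 ht0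
  have hA0 : ∀ i, A i ≠ 0 := by
    intro i
    apply Int.natAbs_ne_zero.2
    intro hc
    have := Polynomial.eval_dvd (x := a)
      ((Finset.dvd_prod_of_mem h (Finset.mem_univ i)).trans ⟨Q, hQ⟩)
    rw [hc] at this
    exact hfa0 (zero_dvd_iff.1 this)
  have hB0 : ∀ i, B i ≠ 0 := fun i => (Nat.zero_lt_of_lt (hAB i)).ne'
  have hprodA : ∀ x : ℤ, (f.eval x).natAbs = (∏ i, ((h i).eval x).natAbs) * t.natAbs := by
    intro x
    rw [hQ, ← ht, eval_mul, eval_C, Int.natAbs_mul, hPdef, eval_prod]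
    congr 1
    exact map_prod Int.natAbsHom (fun i => (h i).eval x) Finset.univ
  have hE1 : (∏ i, A i) * T = p ^ k₁ * r := by rw [← hprodA a, hfa]
  have hE2 : (∏ i, B i) * T = p ^ k₂ := by rw [← hprodA b, hfb]
  -- each B i is a power of p
  have hBdvd : ∀ i, B i ∣ p ^ k₂ := by
    intro i
    rw [← hE2]
    exact ((Finset.dvd_prod_of_mem B (Finset.mem_univ i)).trans (dvd_mul_right _ _))
  choose e hele hBe using fun i => (Nat.dvd_prime_pow hp).1 (hBdvd i)
  -- p-adic valuations
  have hprodA0 : (∏ i, A i) ≠ 0 := Finset.prod_ne_zero_iff.2 fun i _ => hA0 i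
  have hprodB0 : (∏ i, B i) ≠ 0 := Finset.prod_ne_zero_iff.2 fun i _ => hB0 i
  have hval1 : (∑ i, (A i).factorization p) + T.factorization p = k₁ := by
    have h8 : ((∏ i, A i) * T).factorization p = (p ^ k₁ * r).factorization p := by
      rw [hE1]
    rw [Nat.factorization_mul hprodA0 hT0,
      Nat.factorization_mul (pow_ne_zero _ hp.pos.ne') hr0.ne',
      Nat.factorization_prod fun i _ => hA0 i, hp.factorization_pow] at h8
    simpa [Finset.sum_apply', Finsupp.add_apply, Finsupp.single_eq_same,
      Nat.factorization_eq_zero_of_not_dvd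
      (fun hdvd => absurd (Nat.le_of_dvd hr0 hdvd) (not_le.mpr hrp))] using h8
  have hval2 : (∑ i, (B i).factorization p) + T.factorization p = k₂ := by
    have h8 : ((∏ i, B i) * T).factorization p = (p ^ k₂).factorization p := by
      rw [hE2]
    rw [Nat.factorization_mul hprodB0 hT0,
      Nat.factorization_prod fun i _ => hB0 i, hp.factorization_pow] at h8
    simpa [Finset.sum_apply', Finsupp.add_apply, Finsupp.single_eq_same] using h8
  -- strict gain in each factor
  have hgain : ∀ i, (A i).factorization p + 1 ≤ (B i).factorization p := by
    intro i
    have h10 : p ^ ((A i).factorization p) ≤ A i :=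
      Nat.le_of_dvd (Nat.pos_of_ne_zero (hA0 i)) (Nat.ordProj_dvd _ _)
    have h11 : p ^ ((A i).factorization p) < p ^ (e i) := by
      calc p ^ ((A i).factorization p) ≤ A i := h10
        _ < B i := hAB i
        _ = p ^ (e i) := hBe i
    have h12 : (A i).factorization p < e i :=
      (Nat.pow_lt_pow_iff_right hp.one_lt).1 h11
    have h13 : (B i).factorization p = e i := by
      rw [hBe i, hp.factorization_pow]
      simp
    omega
  have hsum : (∑ i, (A i).factorization p) + (K + 1) ≤ ∑ i, (B i).factorization p := by
    calc (∑ i, (A i).factorization p) + (K + 1)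
        = ∑ i : Fin (K + 1), ((A i).factorization p + 1) := by
          rw [Finset.sum_add_distrib]
          simp
      _ ≤ ∑ i, (B i).factorization p := Finset.sum_le_sum fun i _ => hgain i
  omega
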